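/- Let C = {a₁,…,aₙ} with 0 < a₁ < … < aₙ < 1 and let μ_C be the Moser-Carleson-Chang tower on C (with C₋ = ∅). Then ‖∇μ_C‖₂² = 1 if n = 1, and 1 < ‖∇μ_C‖₂² < n if n ≥ 2. -/

import Mathlib

open Real Finset

/-- For a finite set `C = {a₁,…,aₙ} ⊂ (0,1)` with `a₁ < … < aₙ`, the energy of the
Moser-Carleson-Chang tower, given by
`‖∇μ_C‖₂² = Σ_{j=0}^{n} (σⱼ−1)/(σⱼ+1) = 1 + Σ_{j=1}^{n-1} (σⱼ−1)/(σⱼ+1)`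
(where `σⱼ = √(log(1/aⱼ))/√(log(1/a_{j+1}))`, the terms `j = 0` and `j = n` contributing
`0` and `1` respectively), satisfies: it equals `1` when `n = 1`, and lies strictly
between `1` and `n` when `n ≥ 2`. -/
theorem tower_energy_finite_C (n : ℕ) (hn : 1 ≤ n) (a : ℕ → ℝ)
    (hmem : ∀ i, 1 ≤ i → i ≤ n → a i ∈ Set.Ioo (0:ℝ) 1)
    (hmono : ∀ i, 1 ≤ i → i < n → a i < a (i + 1))
    (E : ℝ)
    (hE : E = 1 + ∑ j ∈ Finset.Ico 1 n,
      (Real.sqrt (Real.log (a j)⁻¹) / Real.sqrt (Real.log (a (j + 1))⁻¹) - 1) /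
      (Real.sqrt (Real.log (a j)⁻¹) / Real.sqrt (Real.log (a (j + 1))⁻¹) + 1)) :
    (n = 1 → E = 1) ∧ (2 ≤ n → 1 < E ∧ E < n) := by
  -- For each j in Ico 1 n, the term lies in (0,1).
  have key : ∀ j ∈ Finset.Ico 1 n,
      0 < (Real.sqrt (Real.log (a j)⁻¹) / Real.sqrt (Real.log (a (j + 1))⁻¹) - 1) /
      (Real.sqrt (Real.log (a j)⁻¹) / Real.sqrt (Real.log (a (j + 1))⁻¹) + 1) ∧
      (Real.sqrt (Real.log (a j)⁻¹) / Real.sqrt (Real.log (a (j + 1))⁻¹) - 1) /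
      (Real.sqrt (Real.log (a j)⁻¹) / Real.sqrt (Real.log (a (j + 1))⁻¹) + 1) < 1 := by
    intro j hj
    rw [Finset.mem_Ico] at hj
    obtain ⟨hj1, hjn⟩ := hj
    obtain ⟨ha0, ha1⟩ := hmem j hj1 (le_of_lt hjn)
    obtain ⟨hb0, hb1⟩ := hmem (j + 1) (by omega) (by omega)
    have hab := hmono j hj1 hjn
    -- logs of inverses
    have hL2 : 0 < Real.log (a (j+1))⁻¹ := by
      rw [Real.log_inv]; linarith [Real.log_neg hb0 hb1]
    have hL1 : Real.log (a (j+1))⁻¹ < Real.log (a j)⁻¹ := by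
      rw [Real.log_inv, Real.log_inv]
      have := Real.log_lt_log ha0 hab
      linarith
    have hs2 : 0 < Real.sqrt (Real.log (a (j+1))⁻¹) := Real.sqrt_pos.mpr hL2
    have hs : 1 < Real.sqrt (Real.log (a j)⁻¹) / Real.sqrt (Real.log (a (j + 1))⁻¹) := by
      rw [lt_div_iff₀ hs2, one_mul]
      exact Real.sqrt_lt_sqrt (le_of_lt hL2) hL1
    constructor
    · apply div_pos <;> linarith
    · rw [div_lt_one (by linarith)]; linarith
  constructor
  · intro h1
    subst h1
    simp at hE
    exact hE
  · intro h2
    have hne : (Finset.Ico 1 n).Nonempty := ⟨1, by simp; omega⟩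
    constructor
    · rw [hE]
      have : 0 < ∑ j ∈ Finset.Ico 1 n,
          (Real.sqrt (Real.log (a j)⁻¹) / Real.sqrt (Real.log (a (j + 1))⁻¹) - 1) /
          (Real.sqrt (Real.log (a j)⁻¹) / Real.sqrt (Real.log (a (j + 1))⁻¹) + 1) :=
        Finset.sum_pos (fun j hj => (key j hj).1) hne
      linarith
    · rw [hE]
      have hlt : ∑ j ∈ Finset.Ico 1 n,
          (Real.sqrt (Real.log (a j)⁻¹) / Real.sqrt (Real.log (a (j + 1))⁻¹) - 1) /
          (Real.sqrt (Real.log (a j)⁻¹) / Real.sqrt (Real.log (a (j + 1))⁻¹) + 1)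
          < ∑ _j ∈ Finset.Ico 1 n, (1 : ℝ) :=
        Finset.sum_lt_sum_of_nonempty hne (fun j hj => (key j hj).2)
      have hcard : ∑ _j ∈ Finset.Ico 1 n, (1 : ℝ) = (n - 1 : ℕ) := by
        simp [Nat.card_Ico]
      rw [hcard] at hlt
      have : ((n - 1 : ℕ) : ℝ) = (n : ℝ) - 1 := by
        have := Nat.cast_sub (by omega : 1 ≤ n) (R := ℝ)
        simpa using this
      linarith [hlt, this.symm ▸ hlt]
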